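/- Let N = a + b with a, b positive integers, and let Ω be a probability space carrying random variables Z₁, …, Z_N taking values in {0,1} and a random subset Π of {1,…,N} that is uniformly distributed over all subsets of size a and is independent of (Z₁, …, Z_N). Then for any δ ≥ 0 and ν > 0, the probability that simultaneously Σ_{i∈Π} Z_i ≤ a·δ and Σ_{i∉Π} Z_i ≥ b·(δ + ν) is at most exp(−2·b·a²·ν² / ((a + b)·(a + 1))). -/

import Mathlib

open MeasureTheory
open scoped ProbabilityTheory
open Finset Real

lemma hoeffding_scalar (p s : ℝ) (hp0 : 0 ≤ p) (hp1 : p ≤ 1) :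
    (1 - p) + p * exp s ≤ exp (p * s + s ^ 2 / 8) := by
  rcases eq_or_lt_of_le hp0 with h0 | h0
  · rw [← h0]
    norm_num
    positivity
  rcases eq_or_lt_of_le hp1 with h1 | h1
  · subst h1
    simpa using exp_le_exp.2 (by nlinarith [sq_nonneg s] : s ≤ 1 * s + s^2/8)
  set q := 1 - p with hq
  have hq0 : 0 < q := by simp [hq]; linarith
  have hg : ∀ x : ℝ, 0 < q + p * exp x := fun x => by positivity
  clear_value q
  -- φ x = p x + x²/8 − log (q + p eˣ); want φ ≥ 0
  set φ : ℝ → ℝ := fun x => p * x + x ^ 2 / 8 - log (q + p * exp x) with hφdef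
  set φ' : ℝ → ℝ := fun x => p + x / 4 - p * exp x / (q + p * exp x) with hφ'def
  have hder : ∀ x, HasDerivAt φ (φ' x) x := by
    intro x
    have h1 : HasDerivAt (fun y => q + p * exp y) (p * exp x) x := by
      simpa using ((hasDerivAt_exp x).const_mul p).const_add q
    have h2 : HasDerivAt (fun y => log (q + p * exp y)) (p * exp x / (q + p * exp x)) x :=
      h1.log (ne_of_gt (hg x))
    have h3 : HasDerivAt (fun y => p * y + y ^ 2 / 8) (p + x * 2 / 8) x := by
      have := ((hasDerivAt_pow 2 x).div_const 8).const_add 0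
      have h4 : HasDerivAt (fun y : ℝ => p * y) p x := by simpa using (hasDerivAt_id x).const_mul p
      have h5 := h4.add ((hasDerivAt_pow 2 x).div_const 8)
      refine h5.congr_deriv ?_
      simp [pow_one]
      ring
    have := h3.sub h2
    refine this.congr_deriv ?_
    ring
  have hder' : ∀ x, HasDerivAt φ' (1 / 4 - q * (p * exp x) / (q + p * exp x) ^ 2) x := by
    intro x
    have h1 : HasDerivAt (fun y => q + p * exp y) (p * exp x) x := by
      simpa using ((hasDerivAt_exp x).const_mul p).const_add q
    have h2 : HasDerivAt (fun y => p * exp y) (p * exp x) x := (hasDerivAt_exp x).const_mul p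
    have h3 := h2.div h1 (ne_of_gt (hg x))
    have h4 : HasDerivAt (fun y : ℝ => p + y / 4) (1 / 4) x := by
      simpa using ((hasDerivAt_id x).div_const 4).const_add p
    have := h4.sub h3
    refine this.congr_deriv ?_
    field_simp
    ring
  -- φ'' ≥ 0
  have hsec : ∀ x, 0 ≤ 1 / 4 - q * (p * exp x) / (q + p * exp x) ^ 2 := by
    intro x
    have he : 0 < exp x := exp_pos x
    have key : 4 * (q * (p * exp x)) ≤ (q + p * exp x) ^ 2 := by nlinarith [sq_nonneg (q - p * exp x)]
    have h2 : q * (p * exp x) / (q + p * exp x) ^ 2 ≤ 1 / 4 := by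
      rw [div_le_iff₀ (pow_pos (hg x) 2)]
      linarith [key]
    linarith
  -- φ' is monotone
  have hmono' : Monotone φ' := by
    apply monotone_of_deriv_nonneg
    · exact fun x => (hder' x).differentiableAt
    · intro x
      rw [(hder' x).deriv]
      exact hsec x
  have hφ'0 : φ' 0 = 0 := by
    simp only [hφ'def]
    rw [exp_zero]
    field_simp
    simp only [hq]
    ring
  have hφ0 : φ 0 = 0 := by
    simp only [hφdef]
    rw [exp_zero]
    norm_num [hq]
  -- φ ≥ 0 : split by sign of x
  have hφnonneg : ∀ x, 0 ≤ φ x := by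
    intro x
    rcases le_or_gt 0 x with hx | hx
    · have hmono : MonotoneOn φ (Set.Ici (0:ℝ)) := by
        apply monotoneOn_of_deriv_nonneg (convex_Ici 0)
        · exact fun y _ => ((hder y).differentiableAt).continuousAt.continuousWithinAt
        · exact fun y _ => ((hder y).differentiableAt).differentiableWithinAt
        · intro y hy
          rw [(hder y).deriv]
          have : (0:ℝ) ≤ y := le_of_lt (by simpa using hy)
          calc (0:ℝ) = φ' 0 := hφ'0.symm
          _ ≤ φ' y := hmono' this
      calc (0:ℝ) = φ 0 := hφ0.symm
      _ ≤ φ x := hmono (by simp) (by simpa using hx) hx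
    · have hanti : AntitoneOn φ (Set.Iic (0:ℝ)) := by
        apply antitoneOn_of_deriv_nonpos (convex_Iic 0)
        · exact fun y _ => ((hder y).differentiableAt).continuousAt.continuousWithinAt
        · exact fun y _ => ((hder y).differentiableAt).differentiableWithinAt
        · intro y hy
          rw [(hder y).deriv]
          have hy0 : y ≤ 0 := le_of_lt (by simpa using hy)
          calc φ' y ≤ φ' 0 := hmono' hy0
          _ = 0 := hφ'0
      calc (0:ℝ) = φ 0 := hφ0.symm
      _ ≤ φ x := hanti (by simpa using hx.le) (by simp) hx.le
  -- conclude
  have := hφnonneg s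
  simp only [hφdef] at this
  have hlog : log (q + p * exp s) ≤ p * s + s ^ 2 / 8 := by linarith
  calc q + p * exp s = exp (log (q + p * exp s)) := (exp_log (hg s)).symm
  _ ≤ exp (p * s + s ^ 2 / 8) := exp_le_exp.2 hlog

lemma hoeffding_two_point (p s : ℝ) (hp0 : 0 ≤ p) (hp1 : p ≤ 1) :
    p * exp (s * (1 - p)) + (1 - p) * exp (-(s * p)) ≤ exp (s ^ 2 / 8) := by
  have h := hoeffding_scalar p s hp0 hp1
  have he : 0 < exp (s * p) := exp_pos _
  have : (p * exp (s * (1 - p)) + (1 - p) * exp (-(s * p))) * exp (s * p)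
      = (1 - p) + p * exp s := by
    rw [add_mul, mul_assoc, ← exp_add, mul_assoc, ← exp_add]
    ring_nf
    rw [exp_zero]
    ring
  calc p * exp (s * (1 - p)) + (1 - p) * exp (-(s * p))
      = ((1 - p) + p * exp s) / exp (s * p) := by
        rw [← this]; field_simp
  _ ≤ exp (p * s + s ^ 2 / 8) / exp (s * p) := by gcongr
  _ = exp (s ^ 2 / 8) := by rw [← exp_sub]; ring_nf

lemma serfling_sum (r : ℕ) (hr : 1 ≤ r) (n : ℕ) :
    ∑ k ∈ Finset.Ico r (n + r), ((r : ℝ) / k) ^ 2 ≤ n * (r + 1) / (n + r) := by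
  induction n with
  | zero => simp
  | succ n ih =>
    have hrle : r ≤ n + r := Nat.le_add_left r n
    have hsum : ∑ k ∈ Finset.Ico r (n + 1 + r), ((r : ℝ) / k) ^ 2
        = (∑ k ∈ Finset.Ico r (n + r), ((r : ℝ) / k) ^ 2) + ((r : ℝ) / (n + r)) ^ 2 := by
      have : n + 1 + r = (n + r) + 1 := by ring
      rw [this, Finset.sum_Ico_succ_top hrle]
      push_cast
      ring_nf
    rw [hsum]
    have hnr : (0:ℝ) < (n : ℝ) + r := by
      have : (0:ℝ) < (r:ℝ) := by exact_mod_cast hr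
      linarith [Nat.cast_nonneg (α := ℝ) n]
    have hnr1 : (0:ℝ) < (n : ℝ) + r + 1 := by linarith
    have key : (n:ℝ) * (r + 1) / (n + r) + ((r:ℝ) / (n + r)) ^ 2
        ≤ (n + 1) * (r + 1) / (n + 1 + r) := by
      rw [div_pow, div_add_div _ _ (ne_of_gt hnr) (ne_of_gt (by positivity : (0:ℝ) < ((n:ℝ)+r)^2)), div_le_div_iff₀ (by positivity) (by push_cast; linarith)]
      push_cast
      nlinarith [mul_nonneg (mul_nonneg (Nat.cast_nonneg (α := ℝ) n) (Nat.cast_nonneg (α := ℝ) r)) hnr.le]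
    push_cast
    push_cast at key ih
    linarith [ih, key]

/-- exponential weight for the hypergeometric MGF -/
noncomputable def Eaux (n m r : ℕ) (t : ℝ) (j : ℕ) : ℝ :=
  Real.exp (t * ((j : ℝ) - (n : ℝ) * (m : ℝ) / ((n : ℝ) + (r : ℝ))))

lemma Eaux_pos (n m r : ℕ) (t : ℝ) (j : ℕ) : 0 < Eaux n m r t j := Real.exp_pos _

lemma exp_split1 (nn rr mm j t : ℝ) (h1 : nn + rr ≠ 0) (h2 : nn + 1 + rr ≠ 0) :
    t * ((j + 1) - (nn + 1) * mm / (nn + 1 + rr)) =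
      (t * rr / (nn + rr)) * (1 - mm / (nn + 1 + rr)) + t * (j - nn * (mm - 1) / (nn + rr)) := by
  field_simp
  ring

lemma exp_split2 (nn rr mm j t : ℝ) (h1 : nn + rr ≠ 0) (h2 : nn + 1 + rr ≠ 0) :
    t * (j - (nn + 1) * mm / (nn + 1 + rr)) =
      -((t * rr / (nn + rr)) * (mm / (nn + 1 + rr))) + t * (j - nn * mm / (nn + rr)) := by
  field_simp
  ring

lemma mgf_bound (r : ℕ) (hr : 1 ≤ r) :
    ∀ (n m : ℕ) (t : ℝ), m ≤ n + r →
    ∑ j ∈ range (n + 1), ((m.choose j * (n + r - m).choose (n - j) : ℕ) : ℝ) * Eaux n m r t j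
      ≤ (((n + r).choose n : ℕ) : ℝ) *
        Real.exp (t ^ 2 / 8 * ∑ k ∈ Finset.Ico r (n + r), ((r : ℝ) / (k : ℝ)) ^ 2) := by
  intro n
  induction n with
  | zero =>
    intro m t hm
    simp [Eaux]
  | succ n ih =>
    intro m t hm
    have hnr0 : (0:ℝ) < (n:ℝ) + (r:ℝ) := by
      have : (0:ℝ) < (r:ℝ) := by exact_mod_cast hr
      linarith [Nat.cast_nonneg (α := ℝ) n]
    have hN0 : (0:ℝ) < (n:ℝ) + 1 + (r:ℝ) := by linarith
    have hS0 : (0:ℝ) ≤ ∑ k ∈ Finset.Ico r (n + 1 + r), ((r : ℝ) / (k : ℝ)) ^ 2 :=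
      Finset.sum_nonneg fun k _ => sq_nonneg _
    -- degenerate case m = 0
    rcases Nat.eq_zero_or_pos m with hm0 | hm1
    · subst hm0
      have hLHS : ∑ j ∈ range (n + 1 + 1),
          (((0:ℕ).choose j * (n + 1 + r - 0).choose (n + 1 - j) : ℕ) : ℝ) * Eaux (n+1) 0 r t j
          = ((n + 1 + r).choose (n + 1) : ℝ) := by
        rw [Finset.sum_eq_single 0]
        · simp [Eaux]
        · intro j _ hj
          have : (0:ℕ).choose j = 0 := Nat.choose_eq_zero_of_lt (Nat.pos_of_ne_zero hj)
          simp [this]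
        · intro h; exact absurd (Finset.mem_range.mpr (Nat.succ_pos _)) h
      rw [hLHS]
      exact le_mul_of_one_le_right (Nat.cast_nonneg _) (Real.one_le_exp (by positivity))
    -- degenerate case m = n + 1 + r
    rcases eq_or_lt_of_le hm with hmN | hmN
    · have hLHS : ∑ j ∈ range (n + 1 + 1),
          ((m.choose j * (n + 1 + r - m).choose (n + 1 - j) : ℕ) : ℝ) * Eaux (n+1) m r t j
          = ((n + 1 + r).choose (n + 1) : ℝ) := by
        rw [Finset.sum_eq_single (n+1)]
        · have h1 : n + 1 + r - m = 0 := by omega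
          have hm' : m = n + 1 + r := by omega
          have h2 : Eaux (n+1) m r t (n+1) = 1 := by
            rw [Eaux, hm']
            push_cast
            rw [mul_div_assoc, div_self (by push_cast; linarith)]
            simp
          rw [h1, h2, hm']
          simp
        · intro j hj hjne
          have hjlt : j < n + 1 := by
            have := Finset.mem_range.mp hj
            omega
          have : (n + 1 + r - m).choose (n + 1 - j) = 0 := by
            apply Nat.choose_eq_zero_of_lt
            omega
          simp [this]
        · intro h; exact absurd (Finset.mem_range.mpr (by omega)) h
      rw [hLHS]
      exact le_mul_of_one_le_right (Nat.cast_nonneg _) (Real.one_le_exp (by positivity))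
    -- main case : 1 ≤ m ≤ n + r
    have hmle : m ≤ n + r := by omega
    have hm1le : m - 1 ≤ n + r := by omega
    set p : ℝ := (m : ℝ) / ((n:ℝ) + 1 + (r:ℝ)) with hpdef
    set s : ℝ := t * (r : ℝ) / ((n : ℝ) + (r : ℝ)) with hsdef
    have hp0 : 0 ≤ p := by positivity
    have hp1 : p ≤ 1 := by
      rw [hpdef, div_le_one hN0]
      have h : (m:ℝ) ≤ ((n + 1 + r : ℕ) : ℝ) := by exact_mod_cast hm
      push_cast at h
      linarith
    set X : ℝ := Real.exp (t ^ 2 / 8 * ∑ k ∈ Finset.Ico r (n + r), ((r : ℝ) / (k : ℝ)) ^ 2) with hXdef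
    have hX0 : 0 < X := Real.exp_pos _
    set D : ℝ := (((n + r).choose n : ℕ) : ℝ) with hDdef
    have hD0 : 0 ≤ D := Nat.cast_nonneg _
    set T1 : ℝ := ∑ j ∈ range (n + 1),
        (((m-1).choose j * (n + r - (m-1)).choose (n - j) : ℕ) : ℝ) * Eaux n (m-1) r t j with hT1def
    set T2 : ℝ := ∑ j ∈ range (n + 1),
        ((m.choose j * (n + r - m).choose (n - j) : ℕ) : ℝ) * Eaux n m r t j with hT2def
    have hT1 : T1 ≤ D * X := ih (m-1) t hm1le
    have hT2 : T2 ≤ D * X := ih m t hmle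
    have hT1nn : 0 ≤ T1 := Finset.sum_nonneg fun j _ =>
      mul_nonneg (Nat.cast_nonneg _) (Eaux_pos _ _ _ _ _).le
    have hT2nn : 0 ≤ T2 := Finset.sum_nonneg fun j _ =>
      mul_nonneg (Nat.cast_nonneg _) (Eaux_pos _ _ _ _ _).le
    have hcastm1 : ((m - 1 : ℕ) : ℝ) = (m : ℝ) - 1 := by
      rw [Nat.cast_sub hm1]; norm_num
    have hcastNm : ((n + 1 + r - m : ℕ) : ℝ) = (n : ℝ) + 1 + (r : ℝ) - (m : ℝ) := by
      rw [Nat.cast_sub hm]; push_cast; ring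
    -- exponent splits
    have hexp1 : ∀ j : ℕ, Eaux (n+1) m r t (j+1)
        = Real.exp (s * (1 - p)) * Eaux n (m-1) r t j := by
      intro j
      rw [Eaux, Eaux, ← Real.exp_add]
      congr 1
      rw [hcastm1, hsdef, hpdef]
      push_cast
      exact exp_split1 (n:ℝ) (r:ℝ) (m:ℝ) (j:ℝ) t (ne_of_gt hnr0) (ne_of_gt hN0)
    have hexp2 : ∀ j : ℕ, Eaux (n+1) m r t j
        = Real.exp (-(s * p)) * Eaux n m r t j := by
      intro j
      rw [Eaux, Eaux, ← Real.exp_add]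
      congr 1
      rw [hsdef, hpdef]
      push_cast
      exact exp_split2 (n:ℝ) (r:ℝ) (m:ℝ) (j:ℝ) t (ne_of_gt hnr0) (ne_of_gt hN0)
    -- key splitting identity
    have hkey : ((n+1 : ℕ) : ℝ) *
        (∑ j ∈ range (n + 1 + 1), ((m.choose j * (n + 1 + r - m).choose (n + 1 - j) : ℕ) : ℝ)
          * Eaux (n+1) m r t j)
        = (m : ℝ) * Real.exp (s * (1 - p)) * T1
          + ((n + 1 + r - m : ℕ) : ℝ) * Real.exp (-(s * p)) * T2 := by
      rw [Finset.mul_sum]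
      have hsplit : ∀ j ∈ range (n + 1 + 1),
          ((n+1 : ℕ) : ℝ) * (((m.choose j * (n + 1 + r - m).choose (n + 1 - j) : ℕ) : ℝ)
            * Eaux (n+1) m r t j)
          = ((j * (m.choose j * (n + 1 + r - m).choose (n + 1 - j)) : ℕ) : ℝ) * Eaux (n+1) m r t j
            + (((n + 1 - j) * (m.choose j * (n + 1 + r - m).choose (n + 1 - j)) : ℕ) : ℝ)
              * Eaux (n+1) m r t j := by
        intro j hj
        have hjle : j ≤ n + 1 := Nat.lt_succ_iff.mp (Finset.mem_range.mp hj)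
        have hc : ((n + 1 - j : ℕ) : ℝ) = ((n+1 : ℕ) : ℝ) - (j : ℝ) := by
          rw [Nat.cast_sub hjle]
        push_cast [hc]
        ring
      rw [Finset.sum_congr rfl hsplit, Finset.sum_add_distrib]
      -- first sum : shift index
      have hsum1 : ∑ j ∈ range (n + 1 + 1),
          ((j * (m.choose j * (n + 1 + r - m).choose (n + 1 - j)) : ℕ) : ℝ) * Eaux (n+1) m r t j
          = (m : ℝ) * Real.exp (s * (1 - p)) * T1 := by
        rw [Finset.sum_range_succ']
        have h0 : ((0 * (m.choose 0 * (n + 1 + r - m).choose (n + 1 - 0)) : ℕ) : ℝ)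
            * Eaux (n+1) m r t 0 = 0 := by simp
        rw [h0, add_zero]
        rw [hT1def, Finset.mul_sum]
        apply Finset.sum_congr rfl
        intro j hj
        have hnat : (j+1) * (m.choose (j+1) * (n + 1 + r - m).choose (n + 1 - (j+1)))
            = m * ((m-1).choose j * (n + r - (m-1)).choose (n - j)) := by
          have e1 : n + 1 - (j + 1) = n - j := by omega
          have e2 : n + 1 + r - m = n + r - (m - 1) := by omega
          have e3 : (j + 1) * m.choose (j+1) = m * (m-1).choose j := by
            have e5 : (m - 1) + 1 = m := by omega
            have h := Nat.add_one_mul_choose_eq (m-1) j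
            simp only [Nat.succ_eq_add_one, e5] at h
            rw [h]
            apply mul_comm
          calc (j+1) * (m.choose (j+1) * (n + 1 + r - m).choose (n + 1 - (j+1)))
              = ((j+1) * m.choose (j+1)) * (n + 1 + r - m).choose (n + 1 - (j+1)) := by ring
          _ = (m * (m-1).choose j) * (n + r - (m-1)).choose (n - j) := by rw [e1, e2, e3]
          _ = m * ((m-1).choose j * (n + r - (m-1)).choose (n - j)) := by ring
        rw [hnat, hexp1 j]
        push_cast
        ring
      -- second sum : peel top
      have hsum2 : ∑ j ∈ range (n + 1 + 1),
          (((n + 1 - j) * (m.choose j * (n + 1 + r - m).choose (n + 1 - j)) : ℕ) : ℝ)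
            * Eaux (n+1) m r t j
          = ((n + 1 + r - m : ℕ) : ℝ) * Real.exp (-(s * p)) * T2 := by
        rw [Finset.sum_range_succ]
        have h0 : (((n + 1 - (n+1)) * (m.choose (n+1) * (n + 1 + r - m).choose (n + 1 - (n+1))) : ℕ) : ℝ)
            * Eaux (n+1) m r t (n+1) = 0 := by simp
        rw [h0, add_zero]
        rw [hT2def, Finset.mul_sum]
        apply Finset.sum_congr rfl
        intro j hj
        have hjle : j ≤ n := Nat.lt_succ_iff.mp (Finset.mem_range.mp hj)
        have hnat : (n + 1 - j) * (m.choose j * (n + 1 + r - m).choose (n + 1 - j))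
            = (n + 1 + r - m) * (m.choose j * (n + r - m).choose (n - j)) := by
          have e1 : n + 1 - j = (n - j) + 1 := by omega
          have e3 : ((n - j) + 1) * (n + 1 + r - m).choose ((n - j) + 1)
              = (n + 1 + r - m) * (n + r - m).choose (n - j) := by
            have e4 : (n + r - m) + 1 = n + 1 + r - m := by omega
            have h := Nat.add_one_mul_choose_eq (n + r - m) (n - j)
            simp only [Nat.succ_eq_add_one, e4] at h
            rw [h]
            apply mul_comm
          calc (n + 1 - j) * (m.choose j * (n + 1 + r - m).choose (n + 1 - j))
              = m.choose j * ((n + 1 - j) * (n + 1 + r - m).choose (n + 1 - j)) := by ring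
          _ = m.choose j * ((n + 1 + r - m) * (n + r - m).choose (n - j)) := by rw [e1, e3]
          _ = (n + 1 + r - m) * (m.choose j * (n + r - m).choose (n - j)) := by ring
        rw [hnat, hexp2 j]
        push_cast
        ring
      rw [hsum1, hsum2]
    -- now the estimate
    have hhoeff := hoeffding_two_point p s hp0 hp1
    have hmain : ((n+1 : ℕ) : ℝ) *
        (∑ j ∈ range (n + 1 + 1), ((m.choose j * (n + 1 + r - m).choose (n + 1 - j) : ℕ) : ℝ)
          * Eaux (n+1) m r t j)
        ≤ ((n:ℝ) + 1 + r) * Real.exp (s^2/8) * (D * X) := by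
      rw [hkey]
      have hb1 : (m : ℝ) * Real.exp (s * (1 - p)) * T1
          ≤ (m : ℝ) * Real.exp (s * (1 - p)) * (D * X) := by
        apply mul_le_mul_of_nonneg_left hT1 (by positivity)
      have hb2 : ((n + 1 + r - m : ℕ) : ℝ) * Real.exp (-(s * p)) * T2
          ≤ ((n + 1 + r - m : ℕ) : ℝ) * Real.exp (-(s * p)) * (D * X) := by
        apply mul_le_mul_of_nonneg_left hT2 (by positivity)
      calc (m : ℝ) * Real.exp (s * (1 - p)) * T1
            + ((n + 1 + r - m : ℕ) : ℝ) * Real.exp (-(s * p)) * T2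
          ≤ (m : ℝ) * Real.exp (s * (1 - p)) * (D * X)
            + ((n + 1 + r - m : ℕ) : ℝ) * Real.exp (-(s * p)) * (D * X) := by
            linarith
      _ = (((n:ℝ) + 1 + r) * (p * Real.exp (s * (1 - p)) + (1 - p) * Real.exp (-(s * p)))) * (D * X) := by
            rw [hcastNm, hpdef]
            field_simp
      _ ≤ (((n:ℝ) + 1 + r) * Real.exp (s^2/8)) * (D * X) := by
            apply mul_le_mul_of_nonneg_right _ (by positivity)
            apply mul_le_mul_of_nonneg_left hhoeff (by linarith)
      _ = ((n:ℝ) + 1 + r) * Real.exp (s^2/8) * (D * X) := by ring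
    -- identify the RHS
    have hchoose : ((n+1 : ℕ) : ℝ) * (((n + 1 + r).choose (n+1) : ℕ) : ℝ)
        = ((n:ℝ) + 1 + r) * D := by
      rw [hDdef]
      have := Nat.add_one_mul_choose_eq (n + r) n
      have e : n + r + 1 = n + 1 + r := by omega
      rw [e] at this
      have : ((n + 1 + r) * ((n + r).choose n) : ℕ) = ((n + 1 + r).choose (n+1) * (n+1) : ℕ) := this
      have hc : (((n + 1 + r) * ((n + r).choose n) : ℕ) : ℝ)
          = (((n + 1 + r).choose (n+1) * (n+1) : ℕ) : ℝ) := by exact_mod_cast this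
      push_cast at hc ⊢
      linarith
    have hXs : Real.exp (s^2/8) * X
        = Real.exp (t ^ 2 / 8 * ∑ k ∈ Finset.Ico r (n + 1 + r), ((r : ℝ) / (k : ℝ)) ^ 2) := by
      rw [hXdef, ← Real.exp_add]
      congr 1
      have e : n + 1 + r = (n + r) + 1 := by omega
      rw [e, Finset.sum_Ico_succ_top (Nat.le_add_left r n)]
      rw [hsdef]
      push_cast
      field_simp
      ring
    -- conclude
    have hpos : (0:ℝ) < ((n+1 : ℕ) : ℝ) := by positivity
    rw [← mul_le_mul_iff_right₀ hpos]
    calc ((n+1 : ℕ) : ℝ) *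
        (∑ j ∈ range (n + 1 + 1), ((m.choose j * (n + 1 + r - m).choose (n + 1 - j) : ℕ) : ℝ)
          * Eaux (n+1) m r t j)
        ≤ ((n:ℝ) + 1 + r) * Real.exp (s^2/8) * (D * X) := hmain
    _ = ((n+1 : ℕ) : ℝ) * (((n + 1 + r).choose (n+1) : ℕ) : ℝ) * (Real.exp (s^2/8) * X) := by
        rw [hchoose]; ring
    _ = ((n+1 : ℕ) : ℝ) * ((((n + 1 + r).choose (n+1) : ℕ) : ℝ) *
        Real.exp (t ^ 2 / 8 * ∑ k ∈ Finset.Ico r (n + 1 + r), ((r : ℝ) / (k : ℝ)) ^ 2)) := by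
        rw [← hXs]; ring

lemma hypergeom_tail (a b : ℕ) (ha : 0 < a) (hb : 0 < b) (δ ν : ℝ) (hν : 0 < ν)
    (m : ℕ) (hm : m ≤ b + a) :
    ∑ j ∈ range (b + 1), (if ((m : ℝ) - (j : ℝ) ≤ (a : ℝ) * δ ∧ (b : ℝ) * (δ + ν) ≤ (j : ℝ))
        then ((m.choose j * (b + a - m).choose (b - j) : ℕ) : ℝ) else 0)
    ≤ (((b + a).choose b : ℕ) : ℝ) *
      Real.exp (-(2 * (b : ℝ) * (a : ℝ) ^ 2 * ν ^ 2) / (((a : ℝ) + (b : ℝ)) * ((a : ℝ) + 1))) := by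
  have ha0 : (0:ℝ) < (a:ℝ) := by exact_mod_cast ha
  have hb0 : (0:ℝ) < (b:ℝ) := by exact_mod_cast hb
  have hN0 : (0:ℝ) < (a:ℝ) + (b:ℝ) := by linarith
  have hN0' : (0:ℝ) < (b:ℝ) + (a:ℝ) := by linarith
  have ha1 : (0:ℝ) < (a:ℝ) + 1 := by linarith
  set t : ℝ := 4 * (a:ℝ) * ν / ((a:ℝ) + 1) with htdef
  have ht0 : 0 ≤ t := by positivity
  set c : ℝ := t * ((a:ℝ) * (b:ℝ) * ν / ((a:ℝ) + (b:ℝ))) with hcdef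
  have hc0 : 0 ≤ c := by positivity
  -- term-by-term bound
  have hterm : ∀ j ∈ range (b + 1),
      (if ((m : ℝ) - (j : ℝ) ≤ (a : ℝ) * δ ∧ (b : ℝ) * (δ + ν) ≤ (j : ℝ))
        then ((m.choose j * (b + a - m).choose (b - j) : ℕ) : ℝ) else 0)
      ≤ Real.exp (-c) * (((m.choose j * (b + a - m).choose (b - j) : ℕ) : ℝ) * Eaux b m a t j) := by
    intro j _
    by_cases hcond : ((m : ℝ) - (j : ℝ) ≤ (a : ℝ) * δ ∧ (b : ℝ) * (δ + ν) ≤ (j : ℝ))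
    · rw [if_pos hcond]
      obtain ⟨h1, h2⟩ := hcond
      -- deviation bound
      have hdev : (a:ℝ) * (b:ℝ) * ν ≤ (j:ℝ) * ((a:ℝ) + (b:ℝ)) - (b:ℝ) * (m:ℝ) := by
        have hb1 : (b:ℝ) * ((m:ℝ) - (j:ℝ)) ≤ (b:ℝ) * ((a:ℝ) * δ) :=
          mul_le_mul_of_nonneg_left h1 hb0.le
        have ha2 : (a:ℝ) * ((b:ℝ) * (δ + ν)) ≤ (a:ℝ) * (j:ℝ) :=
          mul_le_mul_of_nonneg_left h2 ha0.le
        nlinarith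
      have hdev2 : (a:ℝ) * (b:ℝ) * ν / ((a:ℝ) + (b:ℝ)) ≤ (j:ℝ) - (b:ℝ) * (m:ℝ) / ((b:ℝ) + (a:ℝ)) := by
        have heq : (j:ℝ) - (b:ℝ) * (m:ℝ) / ((b:ℝ) + (a:ℝ))
            = ((j:ℝ) * ((a:ℝ) + (b:ℝ)) - (b:ℝ) * (m:ℝ)) / ((a:ℝ) + (b:ℝ)) := by
          field_simp
          ring
        rw [heq]
        gcongr
      have hexp1 : (1:ℝ) ≤ Real.exp (-c) * Eaux b m a t j := by
        rw [Eaux, ← Real.exp_add]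
        apply Real.one_le_exp
        have hle : c ≤ t * ((j:ℝ) - (b:ℝ) * (m:ℝ) / ((b:ℝ) + (a:ℝ))) := by
          rw [hcdef]
          exact mul_le_mul_of_nonneg_left hdev2 ht0
        linarith
      calc ((m.choose j * (b + a - m).choose (b - j) : ℕ) : ℝ)
          = ((m.choose j * (b + a - m).choose (b - j) : ℕ) : ℝ) * 1 := by ring
      _ ≤ ((m.choose j * (b + a - m).choose (b - j) : ℕ) : ℝ) *
            (Real.exp (-c) * Eaux b m a t j) := by
            apply mul_le_mul_of_nonneg_left hexp1 (Nat.cast_nonneg _)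
      _ = Real.exp (-c) * (((m.choose j * (b + a - m).choose (b - j) : ℕ) : ℝ) * Eaux b m a t j) := by
            ring
    · rw [if_neg hcond]
      simp only [Eaux]
      positivity
  calc ∑ j ∈ range (b + 1), (if ((m : ℝ) - (j : ℝ) ≤ (a : ℝ) * δ ∧ (b : ℝ) * (δ + ν) ≤ (j : ℝ))
        then ((m.choose j * (b + a - m).choose (b - j) : ℕ) : ℝ) else 0)
      ≤ ∑ j ∈ range (b + 1), Real.exp (-c) *
          (((m.choose j * (b + a - m).choose (b - j) : ℕ) : ℝ) * Eaux b m a t j) :=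
        Finset.sum_le_sum hterm
  _ = Real.exp (-c) * ∑ j ∈ range (b + 1),
        ((m.choose j * (b + a - m).choose (b - j) : ℕ) : ℝ) * Eaux b m a t j := by
        rw [Finset.mul_sum]
  _ ≤ Real.exp (-c) * ((((b + a).choose b : ℕ) : ℝ) *
        Real.exp (t ^ 2 / 8 * ∑ k ∈ Finset.Ico a (b + a), ((a : ℝ) / (k : ℝ)) ^ 2)) := by
        apply mul_le_mul_of_nonneg_left (mgf_bound a ha b m t hm) (Real.exp_pos _).le
  _ ≤ Real.exp (-c) * ((((b + a).choose b : ℕ) : ℝ) *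
        Real.exp (t ^ 2 / 8 * ((b:ℝ) * ((a:ℝ) + 1) / ((b:ℝ) + (a:ℝ))))) := by
        apply mul_le_mul_of_nonneg_left _ (Real.exp_pos _).le
        apply mul_le_mul_of_nonneg_left _ (Nat.cast_nonneg _)
        apply Real.exp_le_exp.2
        apply mul_le_mul_of_nonneg_left (serfling_sum a ha b) (by positivity)
  _ = (((b + a).choose b : ℕ) : ℝ) * Real.exp
        (-c + t ^ 2 / 8 * ((b:ℝ) * ((a:ℝ) + 1) / ((b:ℝ) + (a:ℝ)))) := by
        rw [Real.exp_add]; ring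
  _ = (((b + a).choose b : ℕ) : ℝ) *
      Real.exp (-(2 * (b : ℝ) * (a : ℝ) ^ 2 * ν ^ 2) / (((a : ℝ) + (b : ℝ)) * ((a : ℝ) + 1))) := by
        congr 2
        rw [hcdef, htdef]
        field_simp
        ring

lemma count_inter_card {α : Type*} [Fintype α] [DecidableEq α] (T : Finset α) (b j : ℕ)
    (hj : j ≤ b) :
    (((Finset.univ : Finset α).powersetCard b).filter (fun u => (u ∩ T).card = j)).card
      = (T.card).choose j * ((Fintype.card α) - T.card).choose (b - j) := by
  rw [← Finset.card_compl T, ← Finset.card_powersetCard j T,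
    ← Finset.card_powersetCard (b-j) Tᶜ, ← Finset.card_product]
  apply Finset.card_bij' (fun u _ => (u ∩ T, u \ T)) (fun vw _ => vw.1 ∪ vw.2)
  · -- maps to
    intro u hu
    simp only [Finset.mem_filter, Finset.mem_powersetCard] at hu
    obtain ⟨⟨hsub, hcard⟩, hint⟩ := hu
    simp only [Finset.mem_product, Finset.mem_powersetCard]
    refine ⟨⟨Finset.inter_subset_right, hint⟩, ⟨?_, ?_⟩⟩
    · intro x hx
      simp only [Finset.mem_sdiff] at hx
      simp [hx.2]
    · have := Finset.card_inter_add_card_sdiff u T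
      omega
  · -- inverse maps to
    intro vw hvw
    simp only [Finset.mem_product, Finset.mem_powersetCard] at hvw
    obtain ⟨⟨hv, hvc⟩, hw, hwc⟩ := hvw
    have hdisj : Disjoint vw.1 vw.2 := by
      apply Finset.disjoint_left.mpr
      intro x hx hx2
      have := hw hx2
      simp only [Finset.mem_compl] at this
      exact this (hv hx)
    simp only [Finset.mem_filter, Finset.mem_powersetCard]
    refine ⟨⟨Finset.subset_univ _, ?_⟩, ?_⟩
    · rw [Finset.card_union_of_disjoint hdisj, hvc, hwc]
      omega
    · have hwT : ∀ x ∈ vw.2, x ∉ T := by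
        intro x hx
        have := hw hx
        simpa using this
      have h1 : (vw.1 ∪ vw.2) ∩ T = vw.1 := by
        ext x
        simp only [Finset.mem_inter, Finset.mem_union]
        constructor
        · rintro ⟨hx1 | hx2, hxT⟩
          · exact hx1
          · exact absurd hxT (hwT x hx2)
        · intro hx
          exact ⟨Or.inl hx, hv hx⟩
      rw [h1, hvc]
  · -- left inverse
    intro u hu
    simp only
    exact sup_inf_sdiff u T
  · -- right inverse
    intro vw hvw
    simp only [Finset.mem_product, Finset.mem_powersetCard] at hvw
    obtain ⟨⟨hv, hvc⟩, hw, hwc⟩ := hvw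
    have hwT : ∀ x ∈ vw.2, x ∉ T := by
      intro x hx
      have := hw hx
      simpa using this
    have h1 : (vw.1 ∪ vw.2) ∩ T = vw.1 := by
      ext x
      simp only [Finset.mem_inter, Finset.mem_union]
      constructor
      · rintro ⟨hx1 | hx2, hxT⟩
        · exact hx1
        · exact absurd hxT (hwT x hx2)
      · intro hx
        exact ⟨Or.inl hx, hv hx⟩
    have h2 : (vw.1 ∪ vw.2) \ T = vw.2 := by
      ext x
      simp only [Finset.mem_sdiff, Finset.mem_union]
      constructor
      · rintro ⟨hx1 | hx2, hxT⟩
        · exact absurd (hv hx1) hxT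
        · exact hx2
      · intro hx
        exact ⟨Or.inr hx, hwT x hx⟩
    simp [h1, h2]

lemma sum_powersetCard_fiber {α : Type*} [Fintype α] [DecidableEq α] (T : Finset α) (b : ℕ)
    (f : ℕ → ℝ) :
    ∑ u ∈ (Finset.univ : Finset α).powersetCard b, f ((u ∩ T).card)
      = ∑ j ∈ Finset.range (b + 1),
          ((T.card.choose j * ((Fintype.card α) - T.card).choose (b - j) : ℕ) : ℝ) * f j := by
  have hmaps : ∀ u ∈ (Finset.univ : Finset α).powersetCard b, (u ∩ T).card ∈ Finset.range (b+1) := by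
    intro u hu
    rw [Finset.mem_powersetCard] at hu
    rw [Finset.mem_range]
    have h1 : (u ∩ T).card ≤ u.card := Finset.card_le_card Finset.inter_subset_left
    omega
  rw [← Finset.sum_fiberwise_of_maps_to hmaps (fun u => f ((u ∩ T).card))]
  apply Finset.sum_congr rfl
  intro j hj
  have hj' : j ≤ b := by
    rw [Finset.mem_range] at hj; omega
  have : ∀ u ∈ ((Finset.univ : Finset α).powersetCard b).filter (fun u => (u ∩ T).card = j),
      f ((u ∩ T).card) = f j := by
    intro u hu
    rw [Finset.mem_filter] at hu
    rw [hu.2]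
  rw [Finset.sum_congr rfl this, Finset.sum_const, count_inter_card T b j hj']
  simp [mul_comm]

/-- the 0/1 pattern function attached to a finite set -/
noncomputable def pat {N : ℕ} (T : Finset (Fin N)) : Fin N → ℝ := fun i => if i ∈ T then 1 else 0

lemma count_bound (a b N : ℕ) (ha : 0 < a) (hb : 0 < b) (hN : N = a + b) (δ ν : ℝ)
    (hν : 0 < ν) (T : Finset (Fin N)) :
    (((((Finset.univ : Finset (Fin N)).powersetCard a).filter
        (fun s => (∑ i ∈ s, pat T i) ≤ (a : ℝ) * δ ∧
          (b : ℝ) * (δ + ν) ≤ ∑ i ∈ sᶜ, pat T i)).card : ℕ) : ℝ)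
      ≤ ((N.choose a : ℕ) : ℝ) *
        Real.exp (-(2 * (b : ℝ) * (a : ℝ) ^ 2 * ν ^ 2) / (((a : ℝ) + (b : ℝ)) * ((a : ℝ) + 1))) := by
  classical
  set m : ℕ := T.card with hmdef
  -- sums of pat over finsets are intersection cardinalities
  have hsum : ∀ s : Finset (Fin N), ∑ i ∈ s, pat T i = (((s ∩ T).card : ℕ) : ℝ) := by
    intro s
    simp only [pat]
    rw [Finset.sum_boole]
    congr 1
  have hinter : ∀ s : Finset (Fin N), (s ∩ T).card + (sᶜ ∩ T).card = m := by
    intro s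
    have h1 : sᶜ ∩ T = T \ s := by
      ext x; simp [Finset.mem_sdiff, Finset.mem_compl, Finset.mem_inter, and_comm]
    rw [h1, Finset.inter_comm, hmdef]
    exact Finset.card_inter_add_card_sdiff T s
  -- bijection s ↦ sᶜ
  have hcard : (((Finset.univ : Finset (Fin N)).powersetCard a).filter
        (fun s => (∑ i ∈ s, pat T i) ≤ (a : ℝ) * δ ∧
          (b : ℝ) * (δ + ν) ≤ ∑ i ∈ sᶜ, pat T i)).card
      = (((Finset.univ : Finset (Fin N)).powersetCard b).filter
        (fun u => ((m : ℝ) - ((u ∩ T).card : ℝ) ≤ (a : ℝ) * δ ∧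
          (b : ℝ) * (δ + ν) ≤ ((u ∩ T).card : ℝ)))).card := by
    apply Finset.card_bij' (fun s _ => sᶜ) (fun u _ => uᶜ)
    · intro s _
      exact compl_compl s
    · intro u _
      exact compl_compl u
    · intro s hs
      rw [Finset.mem_filter, Finset.mem_powersetCard] at hs
      obtain ⟨⟨hsub, hcarda⟩, h1, h2⟩ := hs
      rw [hsum] at h1
      rw [hsum] at h2
      rw [Finset.mem_filter, Finset.mem_powersetCard]
      have hcc : sᶜ.card = b := by
        rw [Finset.card_compl, Fintype.card_fin, hcarda]
        omega
      have hic : (sᶜ ∩ T).card = m - (s ∩ T).card := by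
        have := hinter s
        omega
      have hle : (s ∩ T).card ≤ m := by
        have := hinter s
        omega
      refine ⟨⟨Finset.subset_univ _, hcc⟩, ?_, ?_⟩
      · rw [hic]
        rw [Nat.cast_sub hle]
        linarith
      · have h3 : ((sᶜ ∩ T).card : ℝ) = (m : ℝ) - ((s ∩ T).card : ℝ) := by
          rw [hic, Nat.cast_sub hle]
        linarith [h2, h3]
    · intro u hu
      rw [Finset.mem_filter, Finset.mem_powersetCard] at hu
      obtain ⟨⟨hsub, hcardb⟩, h1, h2⟩ := hu
      rw [Finset.mem_filter, Finset.mem_powersetCard]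
      have hcc : uᶜ.card = a := by
        rw [Finset.card_compl, Fintype.card_fin, hcardb]
        omega
      have hic : (uᶜ ∩ T).card = m - (u ∩ T).card := by
        have := hinter u
        omega
      have hle : (u ∩ T).card ≤ m := by
        have := hinter u
        omega
      refine ⟨⟨Finset.subset_univ _, hcc⟩, ?_, ?_⟩
      · rw [hsum, hic, Nat.cast_sub hle]
        linarith
      · rw [hsum, compl_compl]
        linarith
  rw [hcard]
  -- express the filtered card as an indicator sum
  set f : ℕ → ℝ := fun j => if ((m : ℝ) - (j : ℝ) ≤ (a : ℝ) * δ ∧ (b : ℝ) * (δ + ν) ≤ (j : ℝ))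
      then 1 else 0 with hfdef
  have hind : ((((Finset.univ : Finset (Fin N)).powersetCard b).filter
        (fun u => ((m : ℝ) - ((u ∩ T).card : ℝ) ≤ (a : ℝ) * δ ∧
          (b : ℝ) * (δ + ν) ≤ ((u ∩ T).card : ℝ)))).card : ℝ)
      = ∑ u ∈ (Finset.univ : Finset (Fin N)).powersetCard b, f ((u ∩ T).card) := by
    rw [hfdef, Finset.sum_boole]
  rw [hind, sum_powersetCard_fiber T b f]
  have hmN : m ≤ b + a := by
    rw [hmdef]
    have := Finset.card_le_univ T
    rw [Fintype.card_fin] at this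
    omega
  have hNba : Fintype.card (Fin N) - m = b + a - m := by
    rw [Fintype.card_fin]
    omega
  have hchoose : ((b + a).choose b : ℕ) = N.choose a := by
    have h1 : b + a = N := by omega
    rw [h1]
    have h2 : N - a = b := by omega
    calc N.choose b = N.choose (N - a) := by rw [h2]
    _ = N.choose a := Nat.choose_symm (by omega)
  calc ∑ j ∈ Finset.range (b + 1),
        ((m.choose j * ((Fintype.card (Fin N)) - m).choose (b - j) : ℕ) : ℝ) * f j
      = ∑ j ∈ Finset.range (b + 1), (if ((m : ℝ) - (j : ℝ) ≤ (a : ℝ) * δ ∧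
          (b : ℝ) * (δ + ν) ≤ (j : ℝ))
        then ((m.choose j * (b + a - m).choose (b - j) : ℕ) : ℝ) else 0) := by
        apply Finset.sum_congr rfl
        intro j _
        rw [hNba, hfdef]
        simp only [mul_ite, mul_one, mul_zero]
  _ ≤ (((b + a).choose b : ℕ) : ℝ) *
      Real.exp (-(2 * (b : ℝ) * (a : ℝ) ^ 2 * ν ^ 2) / (((a : ℝ) + (b : ℝ)) * ((a : ℝ) + 1))) :=
        hypergeom_tail a b ha hb δ ν hν m hmN
  _ = ((N.choose a : ℕ) : ℝ) *
      Real.exp (-(2 * (b : ℝ) * (a : ℝ) ^ 2 * ν ^ 2) / (((a : ℝ) + (b : ℝ)) * ((a : ℝ) + 1))) := by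
        rw [hchoose]


/-- Law of large numbers for sampling without replacement (Lemma 6 of [TL17]):
if `Π` is a uniformly random subset of `{1,…,N}` of size `a` (with `N = a + b`),
independent of `{0,1}`-valued random variables `Z₁,…,Z_N`, then the probability
that `∑_{i∈Π} Z_i ≤ aδ` and `∑_{i∉Π} Z_i ≥ b(δ+ν)` is at most
`exp(−2ba²ν²/((a+b)(a+1)))`. -/
theorem sampling_without_replacement_bound {Ω : Type*} [MeasureSpace Ω]
    [IsProbabilityMeasure (ℙ : Measure Ω)]
    (a b N : ℕ) (ha : 0 < a) (hb : 0 < b) (hN : N = a + b)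
    (Z : Fin N → Ω → ℝ) (hZmeas : ∀ i, Measurable (Z i))
    (hZval : ∀ i ω, Z i ω = 0 ∨ Z i ω = 1)
    (P : Ω → Finset (Fin N))
    (hcard : ∀ ω, (P ω).card = a)
    (hunif : ∀ s : Finset (Fin N), s.card = a →
      ℙ {ω | P ω = s} = ENNReal.ofReal (1 / (N.choose a)))
    (hindep : ∀ (s : Finset (Fin N)) (E : Set (Fin N → ℝ)), MeasurableSet E →
      ℙ ({ω | P ω = s} ∩ {ω | (fun i => Z i ω) ∈ E}) =
        ℙ {ω | P ω = s} * ℙ {ω | (fun i => Z i ω) ∈ E})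
    (δ ν : ℝ) (hδ : 0 ≤ δ) (hν : 0 < ν) :
    ℙ {ω | (∑ i ∈ P ω, Z i ω) ≤ (a : ℝ) * δ ∧
        (b : ℝ) * (δ + ν) ≤ ∑ i ∈ (P ω)ᶜ, Z i ω} ≤
      ENNReal.ofReal (Real.exp (-(2 * b * (a : ℝ) ^ 2 * ν ^ 2) /
        (((a : ℝ) + b) * ((a : ℝ) + 1)))) := by
  classical
  set B : ℝ := Real.exp (-(2 * b * (a : ℝ) ^ 2 * ν ^ 2) /
        (((a : ℝ) + b) * ((a : ℝ) + 1))) with hBdef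
  have hB0 : 0 < B := Real.exp_pos _
  set C : ℕ := N.choose a with hCdef
  have hC0 : 0 < C := Nat.choose_pos (by omega)
  have hC0' : (0:ℝ) < (C:ℝ) := by exact_mod_cast hC0
  -- event families
  set Es : Finset (Fin N) → Set (Fin N → ℝ) :=
    fun s => {z | (∑ i ∈ s, z i) ≤ (a:ℝ) * δ ∧ (b:ℝ) * (δ + ν) ≤ ∑ i ∈ sᶜ, z i} with hEsdef
  have hEsmeas : ∀ s, MeasurableSet (Es s) := by
    intro s
    have h1 : Measurable (fun z : Fin N → ℝ => ∑ i ∈ s, z i) :=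
      Finset.measurable_sum s (fun i _ => measurable_pi_apply i)
    have h2 : Measurable (fun z : Fin N → ℝ => ∑ i ∈ sᶜ, z i) :=
      Finset.measurable_sum sᶜ (fun i _ => measurable_pi_apply i)
    exact (measurableSet_le h1 measurable_const).inter (measurableSet_le measurable_const h2)
  set ZT : Finset (Fin N) → Set Ω := fun T => {ω | (fun i => Z i ω) = pat T} with hZTdef
  have hZTmeas : ∀ T, MeasurableSet (ZT T) := by
    intro T
    have h1 : Measurable (fun ω => fun i => Z i ω) :=
      measurable_pi_lambda _ (fun i => hZmeas i)
    exact h1 (measurableSet_singleton (pat T))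
  -- step 1 : inclusion over the possible values of P
  have hincl1 : {ω | (∑ i ∈ P ω, Z i ω) ≤ (a : ℝ) * δ ∧
        (b : ℝ) * (δ + ν) ≤ ∑ i ∈ (P ω)ᶜ, Z i ω}
      ⊆ ⋃ s ∈ (Finset.univ : Finset (Fin N)).powersetCard a,
          ({ω | P ω = s} ∩ {ω | (fun i => Z i ω) ∈ Es s}) := by
    intro ω hω
    rw [Set.mem_iUnion₂]
    refine ⟨P ω, ?_, rfl, ?_⟩
    · rw [Finset.mem_powersetCard]
      exact ⟨Finset.subset_univ _, hcard ω⟩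
    · exact hω
  -- step 2 : per-s inclusion over the 0/1 patterns
  have hincl2 : ∀ s : Finset (Fin N), {ω | (fun i => Z i ω) ∈ Es s}
      ⊆ ⋃ T ∈ (Finset.univ : Finset (Finset (Fin N))).filter (fun T => pat T ∈ Es s), ZT T := by
    intro s ω hω
    rw [Set.mem_iUnion₂]
    set T : Finset (Fin N) := Finset.univ.filter (fun i => Z i ω = 1) with hTdef
    have hkey : (fun i => Z i ω) = pat T := by
      funext i
      rcases hZval i ω with h0 | h1
      · have : i ∉ T := by
          rw [hTdef]
          simp [h0]
        simp [pat, this, h0]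
      · have : i ∈ T := by
          rw [hTdef]
          simp [h1]
        simp [pat, this, h1]
    refine ⟨T, ?_, ?_⟩
    · rw [Finset.mem_filter]
      refine ⟨Finset.mem_univ _, ?_⟩
      rw [← hkey]
      exact hω
    · rw [hZTdef]
      exact hkey
  -- step 3 : per-s measure bound
  have hstep3 : ∀ s ∈ (Finset.univ : Finset (Fin N)).powersetCard a,
      ℙ ({ω | P ω = s} ∩ {ω | (fun i => Z i ω) ∈ Es s})
      ≤ ∑ T ∈ (Finset.univ : Finset (Finset (Fin N))),
          (if pat T ∈ Es s then ENNReal.ofReal (1 / (C:ℝ)) * ℙ (ZT T) else 0) := by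
    intro s hs
    rw [Finset.mem_powersetCard] at hs
    rw [hindep s (Es s) (hEsmeas s), hunif s hs.2]
    calc ENNReal.ofReal (1 / (C:ℝ)) * ℙ {ω | (fun i => Z i ω) ∈ Es s}
        ≤ ENNReal.ofReal (1 / (C:ℝ)) * ∑ T ∈ (Finset.univ : Finset (Finset (Fin N))).filter
            (fun T => pat T ∈ Es s), ℙ (ZT T) := by
          apply mul_le_mul_right
          calc ℙ {ω | (fun i => Z i ω) ∈ Es s}
              ≤ ℙ (⋃ T ∈ (Finset.univ : Finset (Finset (Fin N))).filter
                  (fun T => pat T ∈ Es s), ZT T) := measure_mono (hincl2 s)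
          _ ≤ ∑ T ∈ (Finset.univ : Finset (Finset (Fin N))).filter
                  (fun T => pat T ∈ Es s), ℙ (ZT T) := measure_biUnion_finset_le _ _
    _ = ∑ T ∈ (Finset.univ : Finset (Finset (Fin N))).filter
            (fun T => pat T ∈ Es s), ENNReal.ofReal (1 / (C:ℝ)) * ℙ (ZT T) := by
          rw [Finset.mul_sum]
    _ = ∑ T ∈ (Finset.univ : Finset (Finset (Fin N))),
          (if pat T ∈ Es s then ENNReal.ofReal (1 / (C:ℝ)) * ℙ (ZT T) else 0) := by
          rw [Finset.sum_filter]
  -- step 4 : per-T count bound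
  have hstep4 : ∀ T : Finset (Fin N),
      ∑ s ∈ (Finset.univ : Finset (Fin N)).powersetCard a,
        (if pat T ∈ Es s then ENNReal.ofReal (1 / (C:ℝ)) * ℙ (ZT T) else 0)
      ≤ ENNReal.ofReal B * ℙ (ZT T) := by
    intro T
    rw [← Finset.sum_filter]
    rw [Finset.sum_const]
    set cnt : ℕ := (((Finset.univ : Finset (Fin N)).powersetCard a).filter
        (fun s => pat T ∈ Es s)).card with hcntdef
    have hcnt : (cnt : ℝ) ≤ (C:ℝ) * B := by
      have h := count_bound a b N ha hb hN δ ν hν T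
      have heq : cnt = (((Finset.univ : Finset (Fin N)).powersetCard a).filter
          (fun s => (∑ i ∈ s, pat T i) ≤ (a : ℝ) * δ ∧
            (b : ℝ) * (δ + ν) ≤ ∑ i ∈ sᶜ, pat T i)).card := by
        rw [hcntdef]
        congr 1
      rw [heq]
      exact h
    calc cnt • (ENNReal.ofReal (1 / (C:ℝ)) * ℙ (ZT T))
        = (cnt : ENNReal) * ENNReal.ofReal (1 / (C:ℝ)) * ℙ (ZT T) := by
          rw [nsmul_eq_mul, mul_assoc]
    _ ≤ ENNReal.ofReal B * ℙ (ZT T) := by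
          apply mul_le_mul_left
          rw [← ENNReal.ofReal_natCast cnt, ← ENNReal.ofReal_mul (Nat.cast_nonneg cnt)]
          apply ENNReal.ofReal_le_ofReal
          rw [mul_one_div, div_le_iff₀ hC0']
          calc (cnt:ℝ) ≤ (C:ℝ) * B := hcnt
          _ = B * (C:ℝ) := by ring
  -- step 5 : total pattern mass at most one
  have hstep5 : ∑ T ∈ (Finset.univ : Finset (Finset (Fin N))), ℙ (ZT T) ≤ 1 := by
    have hdisj : (↑(Finset.univ : Finset (Finset (Fin N))) : Set (Finset (Fin N))).PairwiseDisjoint ZT := by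
      intro T _ T' _ hne
      rw [Function.onFun, Set.disjoint_left]
      intro ω hω hω'
      apply hne
      rw [hZTdef] at hω hω'
      have hTT : pat T = pat T' := by
        rw [← hω, ← hω']
      ext i
      have := congrFun hTT i
      by_cases hiT : i ∈ T <;> by_cases hiT' : i ∈ T' <;>
        simp [pat, hiT, hiT'] at this ⊢
    rw [← measure_biUnion_finset hdisj (fun T _ => hZTmeas T)]
    exact prob_le_one
  -- assemble
  calc ℙ {ω | (∑ i ∈ P ω, Z i ω) ≤ (a : ℝ) * δ ∧
        (b : ℝ) * (δ + ν) ≤ ∑ i ∈ (P ω)ᶜ, Z i ω}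
      ≤ ℙ (⋃ s ∈ (Finset.univ : Finset (Fin N)).powersetCard a,
          ({ω | P ω = s} ∩ {ω | (fun i => Z i ω) ∈ Es s})) := measure_mono hincl1
  _ ≤ ∑ s ∈ (Finset.univ : Finset (Fin N)).powersetCard a,
        ℙ ({ω | P ω = s} ∩ {ω | (fun i => Z i ω) ∈ Es s}) := measure_biUnion_finset_le _ _
  _ ≤ ∑ s ∈ (Finset.univ : Finset (Fin N)).powersetCard a,
        ∑ T ∈ (Finset.univ : Finset (Finset (Fin N))),
          (if pat T ∈ Es s then ENNReal.ofReal (1 / (C:ℝ)) * ℙ (ZT T) else 0) :=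
        Finset.sum_le_sum hstep3
  _ = ∑ T ∈ (Finset.univ : Finset (Finset (Fin N))),
        ∑ s ∈ (Finset.univ : Finset (Fin N)).powersetCard a,
          (if pat T ∈ Es s then ENNReal.ofReal (1 / (C:ℝ)) * ℙ (ZT T) else 0) :=
        Finset.sum_comm
  _ ≤ ∑ T ∈ (Finset.univ : Finset (Finset (Fin N))), ENNReal.ofReal B * ℙ (ZT T) :=
        Finset.sum_le_sum (fun T _ => hstep4 T)
  _ = ENNReal.ofReal B * ∑ T ∈ (Finset.univ : Finset (Finset (Fin N))), ℙ (ZT T) := by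
        rw [Finset.mul_sum]
  _ ≤ ENNReal.ofReal B * 1 := mul_le_mul_right hstep5 _
  _ = ENNReal.ofReal B := mul_one _
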